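/- Let Γ = ℤ^{2d} and m an order function on ℝ^{2d} × (ℝ^{2d})*. Suppose ∑_{δ∈Γ} (∑_{γ∈Γ} m(γ/2, δ)^p)^{1/p} < ∞ for some 1 ≤ p < ∞ (sum over translated diagonals of ℓ^p norms). Then every matrix (a_{α,β})_{α,β∈Γ} with |a_{α,β}| ≤ m((α+β)/2, J^{−1}(β−α)) belongs to the Schatten class C_p(ℓ²(Γ)), with ‖(a_{α,β})‖_{C_p} ≤ ∑_{δ∈Γ} ‖m(·/2, J^{-1}δ)‖_{ℓ^p(Γ_δ)}, where Γ_δ = {(α,β): β − α = δ}. -/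

import Mathlib

open scoped ENNReal

lemma conj22 : Real.HolderConjugate 2 2 := Real.HolderConjugate.two_two

/-- Cauchy–Schwarz for `ℝ≥0∞`-valued tsums. -/
lemma aux_cs_tsum {ι : Type*} (f g : ι → ℝ≥0∞) :
    ∑' i, f i * g i ≤ (∑' i, f i ^ (2:ℝ)) ^ (1/2:ℝ) * (∑' i, g i ^ (2:ℝ)) ^ (1/2:ℝ) := by
  rw [ENNReal.tsum_eq_iSup_sum]
  refine iSup_le fun s => (ENNReal.inner_le_Lp_mul_Lq s f g conj22).trans ?_
  gcongr <;> [skip; skip] <;> exact ENNReal.sum_le_tsum s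

/-- Jensen-type inequality for sub-probability weights. -/
lemma aux_jensen {ι : Type*} {p : ℝ} (hp : 1 ≤ p) (w f : ι → ℝ≥0∞)
    (hw : ∀ s : Finset ι, ∑ i ∈ s, w i ≤ 1) :
    ∑' i, w i * f i ≤ (∑' i, w i * f i ^ p) ^ (1/p) := by
  rw [ENNReal.tsum_eq_iSup_sum]
  refine iSup_le fun s => (ENNReal.inner_le_weight_mul_Lp_of_nonneg s hp w f).trans ?_
  rw [one_div]
  calc (∑ i ∈ s, w i) ^ (1 - p⁻¹) * (∑ i ∈ s, w i * f i ^ p) ^ p⁻¹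
      ≤ 1 * (∑' i, w i * f i ^ p) ^ p⁻¹ := by
        gcongr
        · exact ENNReal.rpow_le_one (hw s) (by simp; exact inv_le_one_of_one_le₀ hp)
        · exact ENNReal.sum_le_tsum s
    _ = _ := one_mul _

/-- Finite Minkowski over a finset of summands. -/
lemma aux_mink_fin {ι : Type*} [DecidableEq ι] {k : ℕ} {p : ℝ} (hp : 1 ≤ p) (g : ι → Fin k → ℝ≥0∞)
    (s : Finset ι) :
    (∑ j, (∑ i ∈ s, g i j) ^ p) ^ (1/p) ≤ ∑ i ∈ s, (∑ j, g i j ^ p) ^ (1/p) := by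
  have hp0 : 0 < p := lt_of_lt_of_le one_pos hp
  induction s using Finset.induction with
  | empty => simp [ENNReal.zero_rpow_of_pos hp0, ENNReal.zero_rpow_of_pos (by positivity : (0:ℝ) < 1/p), hp0]
  | insert a s' hnot ih =>
      simp only [Finset.sum_insert hnot]
      calc (∑ j, (g a j + ∑ i ∈ s', g i j) ^ p) ^ (1/p)
          ≤ (∑ j, (g a j) ^ p) ^ (1/p) + (∑ j, (∑ i ∈ s', g i j) ^ p) ^ (1/p) :=
            ENNReal.Lp_add_le _ _ _ hp
        _ ≤ _ := by gcongr

/-- Minkowski for a tsum of summands, `ℓ^p(Fin k)` norms. -/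
lemma aux_mink {ι : Type*} {k : ℕ} {p : ℝ} (hp : 1 ≤ p) (g : ι → Fin k → ℝ≥0∞) :
    (∑ j, (∑' i, g i j) ^ p) ^ (1/p) ≤ ∑' i, (∑ j, g i j ^ p) ^ (1/p) := by
  have h1 : Filter.Tendsto (fun s : Finset ι => (∑ j, (∑ i ∈ s, g i j) ^ p) ^ (1/p))
      Filter.atTop (nhds ((∑ j, (∑' i, g i j) ^ p) ^ (1/p))) := by
    apply (ENNReal.continuous_rpow_const.tendsto _).comp
    apply Filter.Tendsto.comp (g := fun v : Fin k → ℝ≥0∞ => ∑ j, v j ^ p)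
    · exact Continuous.tendsto (continuous_finset_sum _ fun j _ => (ENNReal.continuous_rpow_const).comp (continuous_apply j)) _
    · exact tendsto_pi_nhds.2 fun j => ENNReal.summable.hasSum
  refine le_of_tendsto h1 (Filter.Eventually.of_forall fun s => ?_)
  classical
  exact (aux_mink_fin hp g s).trans (ENNReal.sum_le_tsum s)

section ShiftOp
variable {ι : Type*} (w : ι → ℂ) (σ : ι ≃ ι) {M : ℝ}

lemma shift_summable (u : lp (fun _ : ι => ℂ) 2) :
    Summable (fun α => ‖(u : ∀ _ : ι, ℂ) (σ α)‖ ^ (2:ℝ)) := by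
  have h := (lp.memℓp u).summable (by norm_num : 0 < (2:ℝ≥0∞).toReal)
  have h2 : (2:ℝ≥0∞).toReal = (2:ℝ) := by norm_num
  rw [h2] at h
  exact (σ.summable_iff (f := fun i => ‖(u : ∀ _ : ι, ℂ) i‖ ^ (2:ℝ))).2 h

lemma shift_bound (hw : ∀ α, ‖w α‖ ≤ M) (hM : 0 ≤ M) (u : lp (fun _ : ι => ℂ) 2)
    (s : Finset ι) :
    ∑ α ∈ s, ‖w α * (u : ∀ _ : ι, ℂ) (σ α)‖ ^ (2:ℝ) ≤ (M * ‖u‖) ^ (2:ℝ) := by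
  classical
  have step : ∀ α, ‖w α * (u : ∀ _ : ι, ℂ) (σ α)‖ ^ (2:ℝ)
      ≤ M ^ (2:ℝ) * ‖(u : ∀ _ : ι, ℂ) (σ α)‖ ^ (2:ℝ) := by
    intro α
    have h1 : ‖w α * (u : ∀ _ : ι, ℂ) (σ α)‖ ≤ M * ‖(u : ∀ _ : ι, ℂ) (σ α)‖ := by
      rw [norm_mul]; exact mul_le_mul_of_nonneg_right (hw α) (norm_nonneg _)
    calc ‖w α * (u : ∀ _ : ι, ℂ) (σ α)‖ ^ (2:ℝ)
        ≤ (M * ‖(u : ∀ _ : ι, ℂ) (σ α)‖) ^ (2:ℝ) :=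
          Real.rpow_le_rpow (norm_nonneg _) h1 (by norm_num)
      _ = M ^ (2:ℝ) * ‖(u : ∀ _ : ι, ℂ) (σ α)‖ ^ (2:ℝ) := Real.mul_rpow hM (norm_nonneg _)
  calc ∑ α ∈ s, ‖w α * (u : ∀ _ : ι, ℂ) (σ α)‖ ^ (2:ℝ)
      ≤ ∑ α ∈ s, M ^ (2:ℝ) * ‖(u : ∀ _ : ι, ℂ) (σ α)‖ ^ (2:ℝ) :=
        Finset.sum_le_sum fun α _ => step α
    _ = M ^ (2:ℝ) * ∑ β ∈ s.image σ, ‖(u : ∀ _ : ι, ℂ) β‖ ^ (2:ℝ) := by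
        rw [← Finset.mul_sum, Finset.sum_image (fun a _ b _ h => σ.injective h)]
    _ ≤ M ^ (2:ℝ) * ‖u‖ ^ (2:ℝ) := by
        refine mul_le_mul_of_nonneg_left ?_ (Real.rpow_nonneg hM _)
        have := lp.sum_rpow_le_norm_rpow (by norm_num : 0 < (2:ℝ≥0∞).toReal) u (s.image σ)
        simpa using this
    _ = (M * ‖u‖) ^ (2:ℝ) := (Real.mul_rpow hM (norm_nonneg _)).symm

lemma shift_memℓp (hw : ∀ α, ‖w α‖ ≤ M) (hM : 0 ≤ M) (u : lp (fun _ : ι => ℂ) 2) :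
    Memℓp (fun α => w α * (u : ∀ _ : ι, ℂ) (σ α)) 2 := by
  apply memℓp_gen'
  intro s
  have h2 : (2:ℝ≥0∞).toReal = (2:ℝ) := by norm_num
  rw [h2]
  exact shift_bound w σ hw hM u s

/-- The weighted shift operator `u ↦ (α ↦ w α * u (σ α))` on `ℓ²(ι)`. -/
noncomputable def shiftOp (hw : ∀ α, ‖w α‖ ≤ M) (hM : 0 ≤ M) :
    lp (fun _ : ι => ℂ) 2 →L[ℂ] lp (fun _ : ι => ℂ) 2 :=
  LinearMap.mkContinuous
    { toFun := fun u => ⟨fun α => w α * (u : ∀ _ : ι, ℂ) (σ α), shift_memℓp w σ hw hM u⟩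
      map_add' := fun u v => by ext α; simp [mul_add]; rfl
      map_smul' := fun c u => by ext α; simp; ring }
    M
    (by
      intro u
      refine lp.norm_le_of_forall_sum_le (by norm_num) (by positivity) fun s => ?_
      have h2 : (2:ℝ≥0∞).toReal = (2:ℝ) := by norm_num
      rw [h2]
      exact shift_bound w σ hw hM u s)

@[simp] lemma shiftOp_apply (hw : ∀ α, ‖w α‖ ≤ M) (hM : 0 ≤ M) (u : lp (fun _ : ι => ℂ) 2)
    (α : ι) : (shiftOp w σ hw hM u : ∀ _ : ι, ℂ) α = w α * (u : ∀ _ : ι, ℂ) (σ α) := rfl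

lemma shiftOp_norm (hw : ∀ α, ‖w α‖ ≤ M) (hM : 0 ≤ M) : ‖shiftOp w σ hw hM‖ ≤ M :=
  LinearMap.mkContinuous_norm_le _ hM _

end ShiftOp

lemma enn_nnnorm_tsum_le {ι E : Type*} [NormedAddCommGroup E] [CompleteSpace E] (z : ι → E) :
    (‖∑' i, z i‖₊ : ℝ≥0∞) ≤ ∑' i, (‖z i‖₊ : ℝ≥0∞) := by
  by_cases h : ∑' i, (‖z i‖₊ : ℝ≥0∞) = ⊤
  · simp [h]
  · have hs : Summable fun i => ‖z i‖₊ := ENNReal.tsum_coe_ne_top_iff_summable.1 h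
    rw [← ENNReal.coe_tsum hs]
    exact_mod_cast nnnorm_tsum_le hs

lemma sq_sum_le_one {γ : Type*} (s : Finset γ) (z : γ → ℂ)
    (h : ∑ i ∈ s, ‖z i‖ ^ (2:ℝ) ≤ 1) :
    ∑ i ∈ s, (‖z i‖₊ : ℝ≥0∞) ^ (2:ℝ) ≤ 1 := by
  have heq : ∀ i, (‖z i‖₊ : ℝ≥0∞) ^ (2:ℝ) = ENNReal.ofReal (‖z i‖ ^ (2:ℝ)) := by
    intro i
    rw [← ENNReal.ofReal_coe_nnreal, coe_nnnorm, ENNReal.ofReal_rpow_of_nonneg (norm_nonneg _) (by norm_num)]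
  simp_rw [heq]
  rw [← ENNReal.ofReal_sum_of_nonneg (fun i _ => Real.rpow_nonneg (norm_nonneg _) _)]
  calc ENNReal.ofReal (∑ i ∈ s, ‖z i‖ ^ (2:ℝ)) ≤ ENNReal.ofReal 1 :=
        ENNReal.ofReal_le_ofReal h
    _ = 1 := ENNReal.ofReal_one

lemma hasSum_CLM_apply {ι : Type*} {H : Type*} [NormedAddCommGroup H] [NormedSpace ℂ H]
    {TD : ι → H →L[ℂ] H} (h : Summable TD) (u : H) :
    HasSum (fun δ => TD δ u) ((∑' δ, TD δ) u) :=
  (ContinuousLinearMap.apply ℂ H u).hasSum h.hasSum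

/-- The family of diagonal operators of a matrix `a`. -/
noncomputable def diagOp {ι : Type*} [AddGroup ι] (a : ι → ι → ℂ) (M : ι → ℝ)
    (hw : ∀ δ α, ‖a α (α + δ)‖ ≤ M δ) (hM : ∀ δ, 0 ≤ M δ) (δ : ι) :
    lp (fun _ : ι => ℂ) 2 →L[ℂ] lp (fun _ : ι => ℂ) 2 :=
  shiftOp (fun α => a α (α + δ)) (Equiv.addRight δ) (hw δ) (hM δ)

lemma diag_schatten {ι : Type*} [DecidableEq ι] (w : ι → ℂ) (σ : ι ≃ ι) {M : ℝ}
    (hw : ∀ α, ‖w α‖ ≤ M) (hM : 0 ≤ M) {p : ℝ} (hp : 1 ≤ p) {k : ℕ}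
    (e f : Fin k → lp (fun _ : ι => ℂ) 2) (he : Orthonormal ℂ e) (hf : Orthonormal ℂ f) :
    ∑ j, (‖(inner ℂ (shiftOp w σ hw hM (e j)) (f j) : ℂ)‖₊ : ℝ≥0∞) ^ p
      ≤ ∑' α, (‖w α‖₊ : ℝ≥0∞) ^ p := by
  have hp0 : 0 < p := lt_of_lt_of_le one_pos hp
  set B := shiftOp w σ hw hM with hB
  set W : ι → ℝ≥0∞ := fun α => (‖w α‖₊ : ℝ≥0∞) with hW
  set E : Fin k → ι → ℝ≥0∞ := fun j α => (‖(e j : ∀ _ : ι, ℂ) (σ α)‖₊ : ℝ≥0∞) with hE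
  set F : Fin k → ι → ℝ≥0∞ := fun j α => (‖(f j : ∀ _ : ι, ℂ) α‖₊ : ℝ≥0∞) with hF
  set A : Fin k → ℝ≥0∞ := fun j => ∑' α, W α * E j α ^ (2:ℝ) with hA
  set Bq : Fin k → ℝ≥0∞ := fun j => ∑' α, W α * F j α ^ (2:ℝ) with hBq
  -- Step A+B : Cauchy-Schwarz bound on each inner product
  have hc : ∀ j, (‖(inner ℂ (B (e j)) (f j) : ℂ)‖₊ : ℝ≥0∞) ≤ A j ^ (1/2:ℝ) * Bq j ^ (1/2:ℝ) := by
    intro j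
    rw [lp.inner_eq_tsum]
    refine le_trans (enn_nnnorm_tsum_le _) ?_
    have heq : ∀ α, (‖(inner ℂ ((B (e j) : ∀ _ : ι, ℂ) α) ((f j : ∀ _ : ι, ℂ) α) : ℂ)‖₊ : ℝ≥0∞)
        = (W α ^ (1/2:ℝ) * E j α) * (W α ^ (1/2:ℝ) * F j α) := by
      intro α
      have h1 : (B (e j) : ∀ _ : ι, ℂ) α = w α * (e j : ∀ _ : ι, ℂ) (σ α) := rfl
      rw [RCLike.inner_apply, h1]
      rw [show (W α ^ (1/2:ℝ) * E j α) * (W α ^ (1/2:ℝ) * F j α)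
          = (W α ^ (1/2:ℝ) * W α ^ (1/2:ℝ)) * (E j α * F j α) by ring]
      rw [← ENNReal.rpow_add_of_nonneg (1/2) (1/2) (by norm_num) (by norm_num)]
      norm_num
      simp only [hW, hE, hF]
      ring
    rw [tsum_congr heq]
    refine le_trans (aux_cs_tsum _ _) ?_
    have h2 : ∀ (X Y : ℝ≥0∞), (X ^ (1/2:ℝ) * Y) ^ (2:ℝ) = X * Y ^ (2:ℝ) := by
      intro X Y
      rw [ENNReal.mul_rpow_of_nonneg _ _ (by norm_num : (0:ℝ) ≤ 2), ← ENNReal.rpow_mul]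
      norm_num
    simp_rw [h2]
    exact le_refl _
  -- sub-probability weights
  have hsubE : ∀ j (s : Finset ι), ∑ α ∈ s, E j α ^ (2:ℝ) ≤ 1 := by
    intro j s
    refine sq_sum_le_one s (fun α => (e j : ∀ _ : ι, ℂ) (σ α)) ?_
    have h3 := lp.sum_rpow_le_norm_rpow (by norm_num : 0 < (2:ℝ≥0∞).toReal) (e j) (s.image σ)
    rw [Finset.sum_image (fun a _ b _ h => σ.injective h)] at h3
    have h4 : ‖e j‖ = 1 := he.1 j
    simpa [h4] using h3
  have hsubF : ∀ j (s : Finset ι), ∑ α ∈ s, F j α ^ (2:ℝ) ≤ 1 := by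
    intro j s
    refine sq_sum_le_one s (fun α => (f j : ∀ _ : ι, ℂ) α) ?_
    have h3 := lp.sum_rpow_le_norm_rpow (by norm_num : 0 < (2:ℝ≥0∞).toReal) (f j) s
    have h4 : ‖f j‖ = 1 := hf.1 j
    simpa [h4] using h3
  -- Jensen
  have hAj : ∀ j, A j ^ p ≤ ∑' α, W α ^ p * E j α ^ (2:ℝ) := by
    intro j
    have h5 : A j ≤ (∑' α, W α ^ p * E j α ^ (2:ℝ)) ^ p⁻¹ := by
      simp only [hA]
      simpa [mul_comm] using aux_jensen hp (fun α => E j α ^ (2:ℝ)) W (hsubE j)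
    calc A j ^ p ≤ ((∑' α, W α ^ p * E j α ^ (2:ℝ)) ^ p⁻¹) ^ p :=
          ENNReal.rpow_le_rpow h5 hp0.le
      _ = _ := by rw [← ENNReal.rpow_mul, inv_mul_cancel₀ hp0.ne', ENNReal.rpow_one]
  have hBqj : ∀ j, Bq j ^ p ≤ ∑' α, W α ^ p * F j α ^ (2:ℝ) := by
    intro j
    have h5 : Bq j ≤ (∑' α, W α ^ p * F j α ^ (2:ℝ)) ^ p⁻¹ := by
      simp only [hBq]
      simpa [mul_comm] using aux_jensen hp (fun α => F j α ^ (2:ℝ)) W (hsubF j)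
    calc Bq j ^ p ≤ ((∑' α, W α ^ p * F j α ^ (2:ℝ)) ^ p⁻¹) ^ p :=
          ENNReal.rpow_le_rpow h5 hp0.le
      _ = _ := by rw [← ENNReal.rpow_mul, inv_mul_cancel₀ hp0.ne', ENNReal.rpow_one]
  -- Bessel
  have hbesselE : ∀ α, ∑ j, E j α ^ (2:ℝ) ≤ 1 := by
    intro α
    refine sq_sum_le_one Finset.univ (fun j => (e j : ∀ _ : ι, ℂ) (σ α)) ?_
    have h6 := he.sum_inner_products_le (lp.single (E := fun _ : ι => ℂ) 2 (σ α) (1:ℂ)) (s := Finset.univ)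
    have h7 : ∀ j, (inner ℂ (e j) (lp.single (E := fun _ : ι => ℂ) 2 (σ α) (1:ℂ)) : ℂ)
        = (starRingEnd ℂ) ((e j : ∀ _ : ι, ℂ) (σ α)) := by
      intro j
      rw [lp.inner_single_right, RCLike.inner_apply, one_mul]
    have h8 : ‖lp.single (E := fun _ : ι => ℂ) 2 (σ α) (1:ℂ)‖ = 1 := by
      have := lp.norm_single (p := 2) (E := fun _ : ι => ℂ) (by norm_num) (σ α) (1:ℂ)
      simpa using this
    simp only [h7, RCLike.norm_conj, h8, one_pow] at h6
    have h9 : ∀ j : Fin k, ‖(e j : ∀ _ : ι, ℂ) (σ α)‖ ^ (2:ℝ)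
        = ‖(e j : ∀ _ : ι, ℂ) (σ α)‖ ^ (2:ℕ) := by
      intro j; rw [← Real.rpow_natCast]; norm_num
    simpa [h9] using h6
  have hbesselF : ∀ α, ∑ j, F j α ^ (2:ℝ) ≤ 1 := by
    intro α
    refine sq_sum_le_one Finset.univ (fun j => (f j : ∀ _ : ι, ℂ) α) ?_
    have h6 := hf.sum_inner_products_le (lp.single (E := fun _ : ι => ℂ) 2 α (1:ℂ)) (s := Finset.univ)
    have h7 : ∀ j, (inner ℂ (f j) (lp.single (E := fun _ : ι => ℂ) 2 α (1:ℂ)) : ℂ)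
        = (starRingEnd ℂ) ((f j : ∀ _ : ι, ℂ) α) := by
      intro j
      rw [lp.inner_single_right, RCLike.inner_apply, one_mul]
    have h8 : ‖lp.single (E := fun _ : ι => ℂ) 2 α (1:ℂ)‖ = 1 := by
      have := lp.norm_single (p := 2) (E := fun _ : ι => ℂ) (by norm_num) α (1:ℂ)
      simpa using this
    simp only [h7, RCLike.norm_conj, h8, one_pow] at h6
    have h9 : ∀ j : Fin k, ‖(f j : ∀ _ : ι, ℂ) α‖ ^ (2:ℝ)
        = ‖(f j : ∀ _ : ι, ℂ) α‖ ^ (2:ℕ) := by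
      intro j; rw [← Real.rpow_natCast]; norm_num
    simpa [h9] using h6
  -- sum the Jensen bounds
  have hsumA : ∑ j, A j ^ p ≤ ∑' α, W α ^ p := by
    calc ∑ j, A j ^ p ≤ ∑ j, ∑' α, W α ^ p * E j α ^ (2:ℝ) :=
          Finset.sum_le_sum fun j _ => hAj j
      _ = ∑' α, ∑ j, W α ^ p * E j α ^ (2:ℝ) :=
          (Summable.tsum_finsetSum (fun j _ => ENNReal.summable)).symm
      _ = ∑' α, W α ^ p * (∑ j, E j α ^ (2:ℝ)) := by
          congr 1; funext α; rw [Finset.mul_sum]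
      _ ≤ ∑' α, W α ^ p * 1 :=
          ENNReal.tsum_le_tsum fun α => mul_le_mul_right (hbesselE α) _
      _ = ∑' α, W α ^ p := by simp
  have hsumB : ∑ j, Bq j ^ p ≤ ∑' α, W α ^ p := by
    calc ∑ j, Bq j ^ p ≤ ∑ j, ∑' α, W α ^ p * F j α ^ (2:ℝ) :=
          Finset.sum_le_sum fun j _ => hBqj j
      _ = ∑' α, ∑ j, W α ^ p * F j α ^ (2:ℝ) :=
          (Summable.tsum_finsetSum (fun j _ => ENNReal.summable)).symm
      _ = ∑' α, W α ^ p * (∑ j, F j α ^ (2:ℝ)) := by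
          congr 1; funext α; rw [Finset.mul_sum]
      _ ≤ ∑' α, W α ^ p * 1 :=
          ENNReal.tsum_le_tsum fun α => mul_le_mul_right (hbesselF α) _
      _ = ∑' α, W α ^ p := by simp
  -- put it together
  calc ∑ j, (‖(inner ℂ (B (e j)) (f j) : ℂ)‖₊ : ℝ≥0∞) ^ p
      ≤ ∑ j, (A j ^ ((1/2:ℝ)*p)) * (Bq j ^ ((1/2:ℝ)*p)) := by
        refine Finset.sum_le_sum fun j _ => ?_
        calc (‖(inner ℂ (B (e j)) (f j) : ℂ)‖₊ : ℝ≥0∞) ^ p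
            ≤ (A j ^ (1/2:ℝ) * Bq j ^ (1/2:ℝ)) ^ p :=
              ENNReal.rpow_le_rpow (hc j) hp0.le
          _ = (A j ^ ((1/2:ℝ)*p)) * (Bq j ^ ((1/2:ℝ)*p)) := by
              rw [ENNReal.mul_rpow_of_nonneg _ _ hp0.le, ← ENNReal.rpow_mul,
                ← ENNReal.rpow_mul]
    _ ≤ (∑ j, (A j ^ ((1/2:ℝ)*p)) ^ (2:ℝ)) ^ (1/2:ℝ)
          * (∑ j, (Bq j ^ ((1/2:ℝ)*p)) ^ (2:ℝ)) ^ (1/2:ℝ) :=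
        ENNReal.inner_le_Lp_mul_Lq Finset.univ _ _ conj22
    _ = (∑ j, A j ^ p) ^ (1/2:ℝ) * (∑ j, Bq j ^ p) ^ (1/2:ℝ) := by
        congr 1 <;>
          · refine congrArg (· ^ (1/2:ℝ)) (Finset.sum_congr rfl fun j _ => ?_)
            rw [← ENNReal.rpow_mul, show (1/2*p*2 : ℝ) = p by ring]
    _ ≤ (∑' α, W α ^ p) ^ (1/2:ℝ) * (∑' α, W α ^ p) ^ (1/2:ℝ) := by
        gcongr
    _ = ∑' α, W α ^ p := by
        rw [← ENNReal.rpow_add_of_nonneg (1/2) (1/2) (by norm_num) (by norm_num)]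
        norm_num

noncomputable def jap {E : Type*} [NormedAddCommGroup E] (x : E) : ℝ :=
  Real.sqrt (1 + ‖x‖ ^ 2)

/-- The Schatten `p`-norm (`1 ≤ p ≤ ∞`) of a bounded operator on a complex
Hilbert space. -/
noncomputable def schattenNorm {H : Type*} [NormedAddCommGroup H]
    [InnerProductSpace ℂ H] (p : ℝ≥0∞) (T : H →L[ℂ] H) : ℝ≥0∞ :=
  if p = ∞ then (‖T‖₊ : ℝ≥0∞)
  else
    ⨆ (k : ℕ) (e : Fin k → H) (f : Fin k → H) (_ : Orthonormal ℂ e)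
        (_ : Orthonormal ℂ f),
      (∑ j, (‖(inner ℂ (T (e j)) (f j) : ℂ)‖₊ : ℝ≥0∞) ^ p.toReal) ^ (1 / p.toReal)

/-- Coercion of a lattice point of `ℤ^{2d}` to `ℝ^{2d}`. -/
def cv {k : ℕ} (α : Fin k → ℤ) : Fin k → ℝ := fun i => (α i : ℝ)

set_option maxHeartbeats 2000000 in
set_option maxRecDepth 8000 in
theorem stmt15 (d : ℕ)
    (J : (Fin (2*d) → ℝ) ≃ₗ[ℝ] (Fin (2*d) → ℝ))
    (m : (Fin (2*d) → ℝ) × (Fin (2*d) → ℝ) → ℝ)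
    (C₀ N₀ : ℝ) (hC₀ : 0 < C₀) (hN₀ : 1 ≤ N₀)
    (hm_pos : ∀ ρ, 0 < m ρ)
    (hm : ∀ ρ μ, m ρ ≤ C₀ * jap (ρ - μ) ^ N₀ * m μ)
    (p : ℝ) (hp : 1 ≤ p)
    (hS : ∑' δ : Fin (2*d) → ℤ,
        (∑' α : Fin (2*d) → ℤ,
            ENNReal.ofReal (m (cv α + (2⁻¹:ℝ) • cv δ, J.symm (cv δ))) ^ p) ^ (1/p) ≠ ⊤)
    (a : (Fin (2*d) → ℤ) → (Fin (2*d) → ℤ) → ℂ)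
    (ha : ∀ α β, ‖a α β‖ ≤ m ((2⁻¹:ℝ) • (cv α + cv β), J.symm (cv β - cv α))) :
    ∃ T : lp (fun _ : Fin (2*d) → ℤ => ℂ) 2 →L[ℂ] lp (fun _ : Fin (2*d) → ℤ => ℂ) 2,
      (∀ (u : lp (fun _ : Fin (2*d) → ℤ => ℂ) 2) (α : Fin (2*d) → ℤ),
          (T u : ∀ _ : Fin (2*d) → ℤ, ℂ) α = ∑' β, a α β * (u : ∀ _ : Fin (2*d) → ℤ, ℂ) β) ∧
        schattenNorm (ENNReal.ofReal p) T
          ≤ ∑' δ : Fin (2*d) → ℤ,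
              (∑' α : Fin (2*d) → ℤ,
                  ENNReal.ofReal (m (cv α + (2⁻¹:ℝ) • cv δ, J.symm (cv δ))) ^ p) ^ (1/p) := by
  classical
  have hp0 : 0 < p := lt_of_lt_of_le one_pos hp
  -- the dominating diagonal weights
  set mδ : (Fin (2*d) → ℤ) → (Fin (2*d) → ℤ) → ℝ := fun δ α => m (cv α + (2⁻¹:ℝ) • cv δ, J.symm (cv δ)) with hmδ
  set g : (Fin (2*d) → ℤ) → ℝ≥0∞ := fun δ =>
    (∑' α : Fin (2*d) → ℤ, ENNReal.ofReal (mδ δ α) ^ p) ^ (1/p) with hg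
  have hgS : ∑' δ : Fin (2*d) → ℤ, g δ ≠ ⊤ := hS
  have hgne : ∀ δ, g δ ≠ ⊤ := fun δ => ENNReal.ne_top_of_tsum_ne_top hgS δ
  -- domination of the diagonals
  have ha' : ∀ (δ α : Fin (2*d) → ℤ), ‖a α (α + δ)‖ ≤ mδ δ α := by
    intro δ α
    have h1 := ha α (α + δ)
    have h2 : cv (α + δ) = cv α + cv δ := by funext i; simp only [cv, Pi.add_apply]; push_cast; ring
    have h3 : (2⁻¹:ℝ) • (cv α + cv (α + δ)) = cv α + (2⁻¹:ℝ) • cv δ := by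
      rw [h2]; funext i; simp [Pi.smul_apply, smul_eq_mul]; ring
    have h4 : cv (α + δ) - cv α = cv δ := by rw [h2]; abel
    rw [h3, h4] at h1
    exact h1
  have hofreal_le : ∀ (δ α : Fin (2*d) → ℤ), ENNReal.ofReal (mδ δ α) ≤ g δ := by
    intro δ α
    have h1 : ENNReal.ofReal (mδ δ α) = (ENNReal.ofReal (mδ δ α) ^ p) ^ (1/p) := by
      rw [← ENNReal.rpow_mul, mul_one_div_cancel hp0.ne', ENNReal.rpow_one]
    rw [h1, hg]
    exact ENNReal.rpow_le_rpow (ENNReal.le_tsum α) (by positivity)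
  set M : (Fin (2*d) → ℤ) → ℝ := fun δ => (g δ).toReal with hM
  have hMnn : ∀ δ, 0 ≤ M δ := fun δ => ENNReal.toReal_nonneg
  have hwM : ∀ (δ α : Fin (2*d) → ℤ), ‖a α (α + δ)‖ ≤ M δ := by
    intro δ α
    refine (ha' δ α).trans ?_
    have := ENNReal.toReal_mono (hgne δ) (hofreal_le δ α)
    rwa [ENNReal.toReal_ofReal (hm_pos _).le] at this
  -- the diagonal operators
  have hTDnorm : ∀ δ, ‖diagOp a M hwM hMnn δ‖ ≤ M δ := fun δ => shiftOp_norm _ _ _ _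
  have hMsum : Summable M := ENNReal.summable_toReal hgS
  have hTDsum : Summable (diagOp a M hwM hMnn) := Summable.of_norm_bounded hMsum hTDnorm
  have hTu : ∀ u : lp (fun _ : Fin (2*d) → ℤ => ℂ) 2,
      HasSum (fun δ => diagOp a M hwM hMnn δ u) ((∑' δ, diagOp a M hwM hMnn δ) u) := fun u =>
    hasSum_CLM_apply hTDsum u
  refine ⟨∑' δ, diagOp a M hwM hMnn δ, ?_, ?_⟩
  · -- the matrix formula
    intro u α
    have h1 : HasSum
        (fun δ => (inner ℂ (lp.single (E := fun _ : Fin (2*d) → ℤ => ℂ) 2 α (1:ℂ))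
          (diagOp a M hwM hMnn δ u) : ℂ))
        (inner ℂ (lp.single (E := fun _ : Fin (2*d) → ℤ => ℂ) 2 α (1:ℂ))
          ((∑' δ, diagOp a M hwM hMnn δ) u) : ℂ) :=
      (innerSL ℂ (lp.single (E := fun _ : Fin (2*d) → ℤ => ℂ) 2 α (1:ℂ))).hasSum (hTu u)
    have heval : ∀ v : lp (fun _ : Fin (2*d) → ℤ => ℂ) 2,
        (inner ℂ (lp.single (E := fun _ : Fin (2*d) → ℤ => ℂ) 2 α (1:ℂ)) v : ℂ)
        = (v : ∀ _ : Fin (2*d) → ℤ, ℂ) α := by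
      intro v
      rw [lp.inner_single_left, RCLike.inner_apply]
      simp
    simp only [heval] at h1
    rw [h1.tsum_eq.symm]
    have hTDapp : ∀ (δ : Fin (2*d) → ℤ),
        (diagOp a M hwM hMnn δ u : ∀ _ : Fin (2*d) → ℤ, ℂ) α
        = a α (α + δ) * (u : ∀ _ : Fin (2*d) → ℤ, ℂ) (α + δ) := fun δ => rfl
    simp only [hTDapp]
    exact (Equiv.addLeft α).tsum_eq (fun β => a α β * (u : ∀ _ : Fin (2*d) → ℤ, ℂ) β)
  · -- the Schatten bound
    rw [schattenNorm, if_neg (by simp : ENNReal.ofReal p ≠ ⊤)]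
    have htor : (ENNReal.ofReal p).toReal = p := ENNReal.toReal_ofReal hp0.le
    rw [htor]
    refine iSup_le fun k => iSup_le fun e => iSup_le fun f => iSup_le fun he => iSup_le fun hf => ?_
    -- each inner product is the sum over diagonals
    have hinner : ∀ j, HasSum (fun δ => (inner ℂ (diagOp a M hwM hMnn δ (e j)) (f j) : ℂ))
        (inner ℂ ((∑' δ, diagOp a M hwM hMnn δ) (e j)) (f j) : ℂ) := by
      intro j
      have h1 : HasSum (fun δ => (inner ℂ (f j) (diagOp a M hwM hMnn δ (e j)) : ℂ))
          (inner ℂ (f j) ((∑' δ, diagOp a M hwM hMnn δ) (e j)) : ℂ) :=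
        (innerSL ℂ (f j)).hasSum (hTu (e j))
      have h2 := h1.star
      have h3 : ∀ x y : lp (fun _ : Fin (2*d) → ℤ => ℂ) 2,
          star (inner ℂ x y : ℂ) = (inner ℂ y x : ℂ) := fun x y => by
        rw [RCLike.star_def, inner_conj_symm]
      simpa only [h3] using h2
    have hnn : ∀ j, (‖(inner ℂ ((∑' δ, diagOp a M hwM hMnn δ) (e j)) (f j) : ℂ)‖₊ : ℝ≥0∞)
        ≤ ∑' δ, (‖(inner ℂ (diagOp a M hwM hMnn δ (e j)) (f j) : ℂ)‖₊ : ℝ≥0∞) := by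
      intro j
      rw [← (hinner j).tsum_eq]
      exact enn_nnnorm_tsum_le _
    calc (∑ j, (‖(inner ℂ ((∑' δ, diagOp a M hwM hMnn δ) (e j)) (f j) : ℂ)‖₊ : ℝ≥0∞) ^ p) ^ (1/p)
        ≤ (∑ j, (∑' δ, (‖(inner ℂ (diagOp a M hwM hMnn δ (e j)) (f j) : ℂ)‖₊ : ℝ≥0∞)) ^ p)
            ^ (1/p) := by
          gcongr with j hj
          exact hnn j
      _ ≤ ∑' δ, (∑ j, (‖(inner ℂ (diagOp a M hwM hMnn δ (e j)) (f j) : ℂ)‖₊ : ℝ≥0∞) ^ p) ^ (1/p) :=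
          aux_mink hp _
      _ ≤ ∑' δ, g δ := by
          refine ENNReal.tsum_le_tsum fun δ => ?_
          rw [hg]
          refine ENNReal.rpow_le_rpow ?_ (by positivity)
          refine le_trans (diag_schatten _ _ (hwM δ) (hMnn δ) hp e f he hf) ?_
          refine ENNReal.tsum_le_tsum fun α => ?_
          refine ENNReal.rpow_le_rpow ?_ hp0.le
          rw [← ENNReal.ofReal_coe_nnreal, coe_nnnorm]
          exact ENNReal.ofReal_le_ofReal (ha' δ α)
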